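/- Transfer-function kernel identity: let U = [[A, B],[C, D]] be a selfadjoint unitary operator on X ⊕ 𝒰 with X = ⊕_{k=1}^N X_k, and let 𝓕(w) = D + C P(w) (I_X − A P(w))⁻¹ B where P(w) = Σ_k w_k P_{X_k}. Then for all w, ω ∈ 𝔻^N: I_𝒰 − 𝓕(ω)*𝓕(w) = Σ_{k=1}^N (1 − conj(ω_k) w_k) · B* (I_X − P(conj(ω)) A)⁻¹ P_{X_k} (I_X − A P(w))⁻¹ B. -/

import Mathlib

open ContinuousLinearMap

/-- Transfer-function kernel identity for a selfadjoint Agler unitary colligation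
`U = [[A,B],[C,D]]` on `X ⊕ 𝒰` with `X = ⊕_k X_k` (orthogonal projections `P k`):
for the transfer function `𝓕(w) = D + C P(w)(I - A P(w))⁻¹ B` and `w, ω` in the unit
polydisk,
`I - 𝓕(ω)* 𝓕(w) = Σ_k (1 - conj(ω_k) w_k) B* (I - P(conj ω) A)⁻¹ P_k (I - A P(w))⁻¹ B`. -/
theorem stmt_18 {X 𝒰 : Type*}
    [NormedAddCommGroup X] [InnerProductSpace ℂ X] [CompleteSpace X]
    [NormedAddCommGroup 𝒰] [InnerProductSpace ℂ 𝒰] [CompleteSpace 𝒰]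
    (N : ℕ) (P : Fin N → (X →L[ℂ] X))
    (hPsa : ∀ k, star (P k) = P k)
    (hPidem : ∀ k, P k * P k = P k)
    (hPorth : ∀ j k, j ≠ k → P j * P k = 0)
    (hPsum : ∑ k, P k = 1)
    (A : X →L[ℂ] X) (B : 𝒰 →L[ℂ] X) (C : X →L[ℂ] 𝒰) (D : 𝒰 →L[ℂ] 𝒰)
    -- the colligation operator `[[A,B],[C,D]]` is selfadjoint …
    (hA : star A = A) (hD : star D = D) (hC : C = ContinuousLinearMap.adjoint B)
    -- … and unitary (hence an involution): `U² = I` componentwise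
    (hXX : A * A + B.comp C = 1)
    (hXU : A.comp B + B.comp D = 0)
    (hUX : C.comp A + D.comp C = 0)
    (hUU : C.comp B + D * D = 1)
    (w ω : Fin N → ℂ)
    (hw : ∀ k, ‖w k‖ < 1) (hω : ∀ k, ‖ω k‖ < 1)
    (Pw Pω Pcω : X →L[ℂ] X)
    (hPw : Pw = ∑ k, w k • P k) (hPω : Pω = ∑ k, ω k • P k)
    (hPcω : Pcω = ∑ k, (starRingEnd ℂ (ω k)) • P k)
    (Rw Rω Qω : X →L[ℂ] X)
    (hRw1 : (1 - A * Pw) * Rw = 1) (hRw2 : Rw * (1 - A * Pw) = 1)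
    (hRω1 : (1 - A * Pω) * Rω = 1) (hRω2 : Rω * (1 - A * Pω) = 1)
    (hQω1 : (1 - Pcω * A) * Qω = 1) (hQω2 : Qω * (1 - Pcω * A) = 1)
    (Fw Fω : 𝒰 →L[ℂ] 𝒰)
    (hFw : Fw = D + C.comp ((Pw * Rw).comp B))
    (hFω : Fω = D + C.comp ((Pω * Rω).comp B)) :
    1 - (ContinuousLinearMap.adjoint Fω) * Fw =
      ∑ k, (1 - starRingEnd ℂ (ω k) * w k) •
        ((ContinuousLinearMap.adjoint B).comp ((Qω * (P k * Rw)).comp B)) := by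

  -- unitary relations
  have hBC : B.comp C = 1 - A * A := eq_sub_of_add_eq' hXX
  have hDD : D * D = 1 - C.comp B := eq_sub_of_add_eq' hUU
  have hDC : D.comp C = -(C.comp A) := eq_neg_of_add_eq_zero_right hUX
  have hBD : B.comp D = -(A.comp B) := eq_neg_of_add_eq_zero_right hXU
  -- star facts
  have hsPω : star Pω = Pcω := by
    rw [hPω, hPcω, star_sum]
    refine Finset.sum_congr rfl fun k _ => ?_
    rw [star_smul, hPsa, starRingEnd_apply]
  have hsRω : star Rω = Qω := by
    have hs1 : star Rω * (1 - Pcω * A) = 1 := by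
      have h := congrArg star hRω1
      rw [star_mul, star_one, star_sub, star_one, star_mul, hsPω, hA] at h
      exact h
    calc star Rω = star Rω * ((1 - Pcω * A) * Qω) := by rw [hQω1, mul_one]
      _ = (star Rω * (1 - Pcω * A)) * Qω := (mul_assoc _ _ _).symm
      _ = Qω := by rw [hs1, one_mul]
  -- adjoint of the transfer function
  have hadjD : ContinuousLinearMap.adjoint D = D := by
    rw [← ContinuousLinearMap.star_eq_adjoint, hD]
  have hadjc : ContinuousLinearMap.adjoint (C.comp ((Pω * Rω).comp B))
      = C.comp ((Qω * Pcω).comp B) := by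
    rw [ContinuousLinearMap.adjoint_comp, ContinuousLinearMap.adjoint_comp,
      hC, ContinuousLinearMap.adjoint_adjoint, ← ContinuousLinearMap.star_eq_adjoint,
      star_mul, hsRω, hsPω, ← hC, ContinuousLinearMap.comp_assoc]
  have hadj : ContinuousLinearMap.adjoint Fω = D + C.comp ((Qω * Pcω).comp B) := by
    rw [hFω, map_add, hadjD, hadjc]
  -- Neumann-type expansions
  have hRw' : Rw = 1 + A * (Pw * Rw) := by
    calc Rw = (1 - A * Pw) * Rw + A * (Pw * Rw) := by noncomm_ring
      _ = 1 + A * (Pw * Rw) := by rw [hRw1]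
  have hQω' : Qω = 1 + Qω * (Pcω * A) := by
    calc Qω = Qω * (1 - Pcω * A) + Qω * (Pcω * A) := by noncomm_ring
      _ = 1 + Qω * (Pcω * A) := by rw [hQω2]
  -- the key resolvent identity
  have hkey : (1 : X →L[ℂ] X) + A * (Pw * Rw) + (Qω * Pcω) * A
      - (Qω * Pcω) * ((1 - A * A) * (Pw * Rw)) = Qω * ((1 - Pcω * Pw) * Rw) := by
    have h1 : Qω * Rw = (1 + Qω * (Pcω * A)) * (1 + A * (Pw * Rw)) := by
      rw [← hQω', ← hRw']
    have h2 : Qω * ((1 - Pcω * Pw) * Rw)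
        = Qω * Rw - Qω * (Pcω * (Pw * Rw)) := by noncomm_ring
    rw [h2, h1]
    noncomm_ring
  -- diagonal sum
  have hprod : Pcω * Pw = ∑ k, ((starRingEnd ℂ (ω k)) * w k) • P k := by
    rw [hPcω, hPw, Finset.sum_mul_sum]
    refine Finset.sum_congr rfl fun j _ => ?_
    rw [Finset.sum_eq_single j]
    · rw [smul_mul_smul_comm, hPidem]
    · intro k _ hkj
      rw [smul_mul_smul_comm, hPorth j k (Ne.symm hkj), smul_zero]
    · intro h; exact absurd (Finset.mem_univ j) h
  have hdiag : (1 : X →L[ℂ] X) - Pcω * Pw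
      = ∑ k, (1 - starRingEnd ℂ (ω k) * w k) • P k := by
    rw [hprod, ← hPsum, ← Finset.sum_sub_distrib]
    refine Finset.sum_congr rfl fun k _ => ?_
    rw [sub_smul, one_smul]
  -- pointwise unitary relations
  have pDD : ∀ x, D (D x) = x - C (B x) := fun x => by
    have h := ContinuousLinearMap.ext_iff.mp hDD x
    simpa using h
  have pDC : ∀ x, D (C x) = -(C (A x)) := fun x => by
    have h := ContinuousLinearMap.ext_iff.mp hDC x
    simpa using h
  have pBD : ∀ x, B (D x) = -(A (B x)) := fun x => by
    have h := ContinuousLinearMap.ext_iff.mp hBD x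
    simpa using h
  have pBC : ∀ x, B (C x) = x - A (A x) := fun x => by
    have h := ContinuousLinearMap.ext_iff.mp hBC x
    simpa using h
  -- expansion of the product of transfer functions
  have hexp : ∀ M M' : X →L[ℂ] X,
      (D + C.comp (M.comp B)) * (D + C.comp (M'.comp B))
        = 1 - C.comp ((((1 : X →L[ℂ] X) + A * M' + M * A
            - M * ((1 - A * A) * M'))).comp B) := by
    intro M M'
    ext u
    simp only [ContinuousLinearMap.mul_apply, ContinuousLinearMap.add_apply,
      ContinuousLinearMap.sub_apply, ContinuousLinearMap.comp_apply,
      ContinuousLinearMap.one_apply, map_add, map_sub, map_neg, pDD, pDC, pBD, pBC]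
    abel
  rw [hadj, hFw, hexp, hkey, sub_sub_cancel, hdiag, ← hC]
  ext u
  simp only [ContinuousLinearMap.comp_apply, ContinuousLinearMap.mul_apply,
    ContinuousLinearMap.sum_apply, ContinuousLinearMap.smul_apply, Finset.sum_mul,
    smul_mul_assoc, map_sum, map_smul]
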